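/- Let p be an odd prime and F a field of characteristic p. Let H be the group of upper unitriangular 3 × 3 matrices over ZMod p (the extraspecial group p_+^{1+2} of order p^3 and exponent p). Then the Loewy length of the group algebra F[H] equals 4p − 3; in particular, LL(F[H]) = 4p − 3 > 3p − 2 = ρ_p(3, 1). -/

import Mathlib

/-- The Loewy length of a ring: the smallest positive `L` such that the `L`-th power of the
Jacobson radical is zero. -/
noncomputable def loewyLength (A : Type*) [Ring A] : ℕ :=
  sInf {L : ℕ | 0 < L ∧ ((⊥ : Ideal A).jacobson) ^ L = ⊥}

/-- `ρ_p(m,n)`: if `n ≠ 0`, write `m = q·n + r` and set `ρ = q·(p^n − 1) + p^r`; if `n = 0`, set `ρ = 1`. -/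
def rho (p m n : ℕ) : ℕ := if n = 0 then 1 else m / n * (p ^ n - 1) + p ^ (m % n)

/-- The group of upper unitriangular `3 × 3` matrices over `ZMod p`: the subgroup of invertible
`3 × 3` matrices which are upper triangular with all diagonal entries equal to `1`. -/
def unitriangular3 (p : ℕ) : Subgroup (Matrix (Fin 3) (Fin 3) (ZMod p))ˣ where
  carrier := {M | (M : Matrix (Fin 3) (Fin 3) (ZMod p)).BlockTriangular id ∧
    ∀ i, (M : Matrix (Fin 3) (Fin 3) (ZMod p)) i i = 1}
  one_mem' := ⟨Matrix.blockTriangular_one, fun i => Matrix.one_apply_eq i⟩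
  mul_mem' := by
    rintro M N ⟨hMt, hMd⟩ ⟨hNt, hNd⟩
    refine ⟨by simpa using hMt.mul hNt, fun i => ?_⟩
    have : ((M * N : _ˣ) : Matrix (Fin 3) (Fin 3) (ZMod p)) i i =
        ∑ k, (M : Matrix (Fin 3) (Fin 3) (ZMod p)) i k *
          (N : Matrix (Fin 3) (Fin 3) (ZMod p)) k i := by
      simp [Matrix.mul_apply]
    rw [this, Finset.sum_eq_single i]
    · rw [hMd i, hNd i, one_mul]
    · intro k _ hk
      rcases lt_or_gt_of_ne hk with h | h
      · rw [hMt (show (id k : Fin 3) < id i from h), zero_mul]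
      · rw [hNt (show (id i : Fin 3) < id k from h), mul_zero]
    · intro h; exact absurd (Finset.mem_univ i) h
  inv_mem' := by
    rintro M ⟨hMt, hMd⟩
    have hcoe : ((M⁻¹ : _ˣ) : Matrix (Fin 3) (Fin 3) (ZMod p)) =
        ((M : Matrix (Fin 3) (Fin 3) (ZMod p)))⁻¹ := (Matrix.coe_units_inv M)
    haveI : Invertible (M : Matrix (Fin 3) (Fin 3) (ZMod p)) := M.invertible
    have hTinv : ((M : Matrix (Fin 3) (Fin 3) (ZMod p))⁻¹).BlockTriangular id :=
      Matrix.blockTriangular_inv_of_blockTriangular hMt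
    refine ⟨by rw [hcoe]; exact hTinv, fun i => ?_⟩
    have hmul : ((M : Matrix (Fin 3) (Fin 3) (ZMod p))⁻¹ *
        (M : Matrix (Fin 3) (Fin 3) (ZMod p))) i i = 1 := by
      rw [Matrix.inv_mul_of_invertible]; exact Matrix.one_apply_eq i
    rw [Matrix.mul_apply, Finset.sum_eq_single i] at hmul
    · rw [hcoe]
      rw [hMd i, mul_one] at hmul
      exact hmul
    · intro k _ hk
      rcases lt_or_gt_of_ne hk with h | h
      · rw [hTinv (show (id k : Fin 3) < id i from h), zero_mul]
      · rw [hMt (show (id i : Fin 3) < id k from h), mul_zero]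
    · intro h; exact absurd (Finset.mem_univ i) h


variable {p : ℕ}

/-- explicit unitriangular matrix -/
def Em (p : ℕ) (α β γ : ZMod p) : Matrix (Fin 3) (Fin 3) (ZMod p) := !![1,α,γ;0,1,β;0,0,1]

lemma Em_mul (α β γ α' β' γ' : ZMod p) :
    Em p α β γ * Em p α' β' γ' = Em p (α+α') (β+β') (γ+γ'+α*β') := by
  simp only [Em, Matrix.mul_fin_three]; ring_nf

lemma Em_one : Em p 0 0 0 = 1 := by
  simp [Em, Matrix.one_fin_three]

/-- as a unit -/
def Eu (p : ℕ) (α β γ : ZMod p) : (Matrix (Fin 3) (Fin 3) (ZMod p))ˣ where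
  val := Em p α β γ
  inv := Em p (-α) (-β) (α*β - γ)
  val_inv := by rw [Em_mul, ← Em_one]; ring_nf
  inv_val := by rw [Em_mul, ← Em_one]; ring_nf

lemma Eu_mem (α β γ : ZMod p) : Eu p α β γ ∈ unitriangular3 p := by
  constructor
  · intro i j hij
    fin_cases i <;> fin_cases j <;> (try (exfalso; revert hij; decide)) <;> simp [Eu, Em, Matrix.vecHead, Matrix.vecTail]
  · intro i; fin_cases i <;> simp [Eu, Em, Matrix.vecHead, Matrix.vecTail]

/-- element of the subgroup -/
def gE (p : ℕ) (α β γ : ZMod p) : unitriangular3 p := ⟨Eu p α β γ, Eu_mem α β γ⟩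

lemma gE_mul (α β γ α' β' γ' : ZMod p) :
    gE p α β γ * gE p α' β' γ' = gE p (α+α') (β+β') (γ+γ'+α*β') := by
  apply Subtype.ext; apply Units.ext
  exact Em_mul α β γ α' β' γ'

lemma gE_one : gE p 0 0 0 = 1 := by
  apply Subtype.ext; apply Units.ext; exact Em_one

lemma gE_inj {α β γ α' β' γ' : ZMod p} (h : gE p α β γ = gE p α' β' γ') :
    α = α' ∧ β = β' ∧ γ = γ' := by
  have h2 : Em p α β γ = Em p α' β' γ' := congrArg (fun M : unitriangular3 p => ((M : (Matrix (Fin 3) (Fin 3) (ZMod p))ˣ) : Matrix (Fin 3) (Fin 3) (ZMod p))) h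
  simp only [Em] at h2
  refine ⟨?_, ?_, ?_⟩
  · have := congrFun (congrFun h2 0) 1; simpa using this
  · have := congrFun (congrFun h2 1) 2; simpa using this
  · have := congrFun (congrFun h2 0) 2; simpa using this

lemma gE_X_pow (n : ℕ) : (gE p 1 0 0) ^ n = gE p n 0 0 := by
  induction n with
  | zero => simpa using gE_one.symm
  | succ n ih => rw [pow_succ, ih, gE_mul]; push_cast; ring_nf

lemma gE_Y_pow (n : ℕ) : (gE p 0 1 0) ^ n = gE p 0 n 0 := by
  induction n with
  | zero => simpa using gE_one.symm
  | succ n ih => rw [pow_succ, ih, gE_mul]; push_cast; ring_nf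

lemma gE_Z_pow (n : ℕ) : (gE p 0 0 1) ^ n = gE p 0 0 n := by
  induction n with
  | zero => simpa using gE_one.symm
  | succ n ih => rw [pow_succ, ih, gE_mul]; push_cast; ring_nf

/-- normal form: Y^β X^α Z^γ = gE α β γ -/
lemma gE_normal (i j k : ℕ) :
    (gE p 0 1 0) ^ i * (gE p 1 0 0) ^ j * (gE p 0 0 1) ^ k = gE p j i k := by
  rw [gE_X_pow, gE_Y_pow, gE_Z_pow, gE_mul, gE_mul]; ring_nf

/-- every element of the group has the normal form -/
lemma gE_surj (g : unitriangular3 p) : ∃ α β γ : ZMod p, g = gE p α β γ := by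
  obtain ⟨M, hMt, hMd⟩ := g
  refine ⟨((M : (Matrix (Fin 3) (Fin 3) (ZMod p))ˣ) : Matrix (Fin 3) (Fin 3) (ZMod p)) 0 1, ((M : (Matrix (Fin 3) (Fin 3) (ZMod p))ˣ) : Matrix (Fin 3) (Fin 3) (ZMod p)) 1 2, ((M : (Matrix (Fin 3) (Fin 3) (ZMod p))ˣ) : Matrix (Fin 3) (Fin 3) (ZMod p)) 0 2, ?_⟩
  apply Subtype.ext; apply Units.ext
  show ((M : (Matrix (Fin 3) (Fin 3) (ZMod p))ˣ) : Matrix (Fin 3) (Fin 3) (ZMod p)) = Em p _ _ _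
  set N := ((M : (Matrix (Fin 3) (Fin 3) (ZMod p))ˣ) : Matrix (Fin 3) (Fin 3) (ZMod p)) with hN
  have h10 : N 1 0 = 0 := hMt (by decide)
  have h20 : N 2 0 = 0 := hMt (by decide)
  have h21 : N 2 1 = 0 := hMt (by decide)
  ext i j
  fin_cases i <;> fin_cases j <;>
    simp_all [Em, Matrix.vecHead, Matrix.vecTail] <;>
    first | exact hMd 0 | exact hMd 1 | exact hMd 2

lemma gE_comm_rel : gE p 1 0 0 * gE p 0 1 0 = gE p 0 1 0 * gE p 1 0 0 * gE p 0 0 1 := by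
  rw [gE_mul, gE_mul, gE_mul]; ring_nf

lemma gE_Z_central (g : unitriangular3 p) : gE p 0 0 1 * g = g * gE p 0 0 1 := by
  obtain ⟨α, β, γ, rfl⟩ := gE_surj g
  rw [gE_mul, gE_mul]; ring_nf

set_option linter.unusedSectionVars false
section Alg

variable (p : ℕ) (F : Type*) [Field F]

local notation "G" => unitriangular3 p
local notation "A" => MonoidAlgebra F (unitriangular3 p)

noncomputable def aa : MonoidAlgebra F (unitriangular3 p) :=
  MonoidAlgebra.of F (unitriangular3 p) (gE p 0 1 0) - 1
noncomputable def bb : MonoidAlgebra F (unitriangular3 p) :=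
  MonoidAlgebra.of F (unitriangular3 p) (gE p 1 0 0) - 1
noncomputable def cc : MonoidAlgebra F (unitriangular3 p) :=
  MonoidAlgebra.of F (unitriangular3 p) (gE p 0 0 1) - 1

variable {p F}

lemma cc_commute (x : MonoidAlgebra F (unitriangular3 p)) : Commute (cc p F) x := by
  have hz : ∀ g : G, Commute (MonoidAlgebra.of F G (gE p 0 0 1)) (MonoidAlgebra.of F G g) := by
    intro g
    simp only [Commute, SemiconjBy, ← map_mul, gE_Z_central]
  have hc : Commute (MonoidAlgebra.of F G (gE p 0 0 1)) x := by
    induction x using MonoidAlgebra.induction_on with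
    | of g => exact hz g
    | add f g ihf ihg => exact Commute.add_right ihf ihg
    | smul r f ih => exact ih.smul_right r
  simpa [cc] using (Commute.sub_left hc (Commute.one_left x))

lemma comm_rel : bb p F * aa p F =
    aa p F * bb p F + cc p F + aa p F * cc p F + bb p F * cc p F + aa p F * bb p F * cc p F := by
  set u := MonoidAlgebra.of F G (gE p 1 0 0) with hu
  set v := MonoidAlgebra.of F G (gE p 0 1 0) with hv
  set w := MonoidAlgebra.of F G (gE p 0 0 1) with hw
  have h : u * v = v * u * w := by
    rw [hu, hv, hw, ← map_mul, ← map_mul, ← map_mul, gE_comm_rel]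
  show (u-1) * (v-1) = (v-1)*(u-1) + (w-1) + (v-1)*(w-1) + (u-1)*(w-1) + (v-1)*(u-1)*(w-1)
  have expand : (v-1)*(u-1) + (w-1) + (v-1)*(w-1) + (u-1)*(w-1) + (v-1)*(u-1)*(w-1)
      = v*u*w - u - v + 1 := by noncomm_ring
  rw [expand]
  have : (u-1)*(v-1) = u*v - u - v + 1 := by noncomm_ring
  rw [this, h]

variable [Fact p.Prime] [CharP F p]

lemma aa_pow_p : (aa p F) ^ p = 0 := by
  haveI hA : CharP (MonoidAlgebra F (unitriangular3 p)) p :=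
    charP_of_injective_algebraMap (algebraMap F (MonoidAlgebra F G)).injective p
  have : (aa p F) ^ p = (MonoidAlgebra.of F G (gE p 0 1 0)) ^ p - 1 ^ p :=
    sub_pow_char_of_commute p (Commute.one_right _)
  rw [this, ← map_pow, gE_Y_pow, one_pow]
  rw [show ((p : ZMod p)) = 0 by simp, gE_one, map_one, sub_self]

lemma bb_pow_p : (bb p F) ^ p = 0 := by
  haveI hA : CharP (MonoidAlgebra F (unitriangular3 p)) p :=
    charP_of_injective_algebraMap (algebraMap F (MonoidAlgebra F G)).injective p
  have : (bb p F) ^ p = (MonoidAlgebra.of F G (gE p 1 0 0)) ^ p - 1 ^ p :=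
    sub_pow_char_of_commute p (Commute.one_right _)
  rw [this, ← map_pow, gE_X_pow, one_pow]
  rw [show ((p : ZMod p)) = 0 by simp, gE_one, map_one, sub_self]

lemma cc_pow_p : (cc p F) ^ p = 0 := by
  haveI hA : CharP (MonoidAlgebra F (unitriangular3 p)) p :=
    charP_of_injective_algebraMap (algebraMap F (MonoidAlgebra F G)).injective p
  have : (cc p F) ^ p = (MonoidAlgebra.of F G (gE p 0 0 1)) ^ p - 1 ^ p :=
    sub_pow_char_of_commute p (Commute.one_right _)
  rw [this, ← map_pow, gE_Z_pow, one_pow]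
  rw [show ((p : ZMod p)) = 0 by simp, gE_one, map_one, sub_self]

end Alg

section Filt

set_option linter.unusedSectionVars false

variable {p : ℕ} {F : Type*} [Field F]

local notation "G" => unitriangular3 p
local notation "A" => MonoidAlgebra F (unitriangular3 p)

/-- monomial -/
noncomputable def mono (p : ℕ) (F : Type*) [Field F] (i j k : ℕ) : MonoidAlgebra F (unitriangular3 p) :=
  aa p F ^ i * bb p F ^ j * cc p F ^ k

/-- weight filtration -/
noncomputable def Wf (p : ℕ) (F : Type*) [Field F] (n : ℕ) :
    Submodule F (MonoidAlgebra F (unitriangular3 p)) :=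
  Submodule.span F {x | ∃ i j k, n ≤ i + j + 2*k ∧ x = mono p F i j k}

lemma mono_mem {i j k n : ℕ} (h : n ≤ i + j + 2*k) : mono p F i j k ∈ Wf p F n :=
  Submodule.subset_span ⟨i, j, k, h, rfl⟩

lemma Wf_antitone {m n : ℕ} (h : m ≤ n) : Wf p F n ≤ Wf p F m :=
  Submodule.span_mono (fun x ⟨i,j,k,hw,hx⟩ => ⟨i,j,k, le_trans h hw, hx⟩)

/-- pushing a linear map through a span -/
lemma span_map_le {s : Set (MonoidAlgebra F (unitriangular3 p))}
    {T : Submodule F (MonoidAlgebra F (unitriangular3 p))}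
    (f : MonoidAlgebra F (unitriangular3 p) →ₗ[F] MonoidAlgebra F (unitriangular3 p))
    (h : ∀ x ∈ s, f x ∈ T) : ∀ x ∈ Submodule.span F s, f x ∈ T := by
  intro x hx
  induction hx using Submodule.span_induction with
  | mem x hx => exact h x hx
  | zero => rw [map_zero]; exact T.zero_mem
  | add x y _ _ ihx ihy => rw [map_add]; exact T.add_mem ihx ihy
  | smul r x _ ih => rw [map_smul]; exact T.smul_mem r ih

lemma mulLeft_aa {n : ℕ} {x : MonoidAlgebra F (unitriangular3 p)} (hx : x ∈ Wf p F n) :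
    aa p F * x ∈ Wf p F (n+1) := by
  refine span_map_le (LinearMap.mulLeft F (aa p F)) ?_ x hx
  rintro y ⟨i,j,k,hw,rfl⟩
  have : aa p F * mono p F i j k = mono p F (i+1) j k := by
    simp [mono, pow_succ', mul_assoc]
  rw [LinearMap.mulLeft_apply, this]
  exact mono_mem (by omega)

lemma mulRight_bb {n : ℕ} {x : MonoidAlgebra F (unitriangular3 p)} (hx : x ∈ Wf p F n) :
    x * bb p F ∈ Wf p F (n+1) := by
  refine span_map_le (LinearMap.mulRight F (bb p F)) ?_ x hx
  rintro y ⟨i,j,k,hw,rfl⟩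
  have hcb : Commute (cc p F ^ k) (bb p F) := ((cc_commute (bb p F)).pow_left k)
  have : mono p F i j k * bb p F = mono p F i (j+1) k := by
    simp only [mono, pow_succ]
    rw [mul_assoc, hcb.eq, ← mul_assoc, ← mul_assoc]
  rw [LinearMap.mulRight_apply, this]
  exact mono_mem (by omega)

lemma mulRight_cc {n : ℕ} {x : MonoidAlgebra F (unitriangular3 p)} (hx : x ∈ Wf p F n) :
    x * cc p F ∈ Wf p F (n+2) := by
  refine span_map_le (LinearMap.mulRight F (cc p F)) ?_ x hx
  rintro y ⟨i,j,k,hw,rfl⟩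
  have : mono p F i j k * cc p F = mono p F i j (k+1) := by
    simp only [mono, pow_succ, mul_assoc]
  rw [LinearMap.mulRight_apply, this]
  exact mono_mem (by omega)

/-- key straightening lemma -/
lemma bpow_mul_aa (j : ℕ) : bb p F ^ j * aa p F ∈ Wf p F (j+1) := by
  induction j with
  | zero =>
    simpa [mono] using mono_mem (p := p) (F := F) (i := 1) (j := 0) (k := 0) (n := 1) (by omega)
  | succ j ih =>
    have expand : bb p F ^ (j+1) * aa p F =
        (bb p F ^ j * aa p F) * bb p F + bb p F ^ j * cc p F
          + (bb p F ^ j * aa p F) * cc p F + (bb p F ^ j * bb p F) * cc p F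
          + ((bb p F ^ j * aa p F) * bb p F) * cc p F := by
      rw [pow_succ, mul_assoc, comm_rel]
      noncomm_ring
    rw [expand]
    have h1 : (bb p F ^ j * aa p F) * bb p F ∈ Wf p F (j+2) := mulRight_bb ih
    have h2 : bb p F ^ j * cc p F ∈ Wf p F (j+2) := by
      have e : bb p F ^ j * cc p F = mono p F 0 j 1 := by
        simp [mono]
      rw [e]; exact mono_mem (by omega)
    have h3 : (bb p F ^ j * aa p F) * cc p F ∈ Wf p F (j+2) :=
      Wf_antitone (by omega) (mulRight_cc ih)
    have h4 : (bb p F ^ j * bb p F) * cc p F ∈ Wf p F (j+2) := by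
      have e : (bb p F ^ j * bb p F) * cc p F = mono p F 0 (j+1) 1 := by
        simp [mono, pow_succ]
      rw [e]; exact mono_mem (by omega)
    have h5 : ((bb p F ^ j * aa p F) * bb p F) * cc p F ∈ Wf p F (j+2) :=
      Wf_antitone (by omega) (mulRight_cc (mulRight_bb ih))
    exact Submodule.add_mem _ (Submodule.add_mem _ (Submodule.add_mem _
      (Submodule.add_mem _ h1 h2) h3) h4) h5

lemma mulRight_cpow {n k : ℕ} {x : MonoidAlgebra F (unitriangular3 p)} (hx : x ∈ Wf p F n) :
    x * cc p F ^ k ∈ Wf p F (n + 2*k) := by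
  induction k with
  | zero => simpa using hx
  | succ k ihk =>
    have e : x * cc p F ^ (k+1) = (x * cc p F ^ k) * cc p F := by
      rw [pow_succ, mul_assoc]
    rw [e]
    exact Wf_antitone (by omega) (mulRight_cc ihk)

lemma mulLeft_apow {n i : ℕ} {x : MonoidAlgebra F (unitriangular3 p)} (hx : x ∈ Wf p F n) :
    aa p F ^ i * x ∈ Wf p F (n + i) := by
  induction i with
  | zero => simpa using hx
  | succ i ihi =>
    have e : aa p F ^ (i+1) * x = aa p F * (aa p F ^ i * x) := by
      rw [pow_succ', mul_assoc]
    rw [e]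
    exact Wf_antitone (by omega) (mulLeft_aa ihi)

lemma mulRight_aa {n : ℕ} {x : MonoidAlgebra F (unitriangular3 p)} (hx : x ∈ Wf p F n) :
    x * aa p F ∈ Wf p F (n+1) := by
  refine span_map_le (LinearMap.mulRight F (aa p F)) ?_ x hx
  rintro y ⟨i,j,k,hw,rfl⟩
  rw [LinearMap.mulRight_apply]
  have hca : Commute (cc p F ^ k) (aa p F) := ((cc_commute (aa p F)).pow_left k)
  have e : mono p F i j k * aa p F = aa p F ^ i * ((bb p F ^ j * aa p F) * cc p F ^ k) := by
    simp only [mono]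
    rw [mul_assoc, mul_assoc, hca.eq, ← mul_assoc, ← mul_assoc, mul_assoc (aa p F ^ i), mul_assoc]
  rw [e]
  have step1 : (bb p F ^ j * aa p F) * cc p F ^ k ∈ Wf p F ((j + 1) + 2*k) :=
    mulRight_cpow (bpow_mul_aa j)
  exact Wf_antitone (by omega) (mulLeft_apow step1)

/-- products multiply weights -/
lemma Wf_mul {m n : ℕ} {x y : MonoidAlgebra F (unitriangular3 p)}
    (hx : x ∈ Wf p F m) (hy : y ∈ Wf p F n) : x * y ∈ Wf p F (m + n) := by
  have key : ∀ (k j i : ℕ) (z : MonoidAlgebra F (unitriangular3 p)), z ∈ Wf p F m →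
      z * mono p F i j k ∈ Wf p F (m + (i + j + 2*k)) := by
    intro k
    induction k with
    | zero =>
      intro j
      induction j with
      | zero =>
        intro i
        induction i with
        | zero =>
          intro z hz
          have e : mono p F 0 0 0 = 1 := by simp [mono]
          rw [e, mul_one]
          exact Wf_antitone (by omega) hz
        | succ i ihi =>
          intro z hz
          have e : z * mono p F (i+1) 0 0 = (z * mono p F i 0 0) * aa p F := by
            simp only [mono, pow_succ, pow_zero, mul_one]
            rw [mul_assoc]
          rw [e]
          exact Wf_antitone (by omega) (mulRight_aa (ihi z hz))
      | succ j ihj =>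
        intro i z hz
        have e : z * mono p F i (j+1) 0 = (z * mono p F i j 0) * bb p F := by
          simp only [mono, pow_succ, pow_zero, mul_one]
          rw [mul_assoc, mul_assoc]
        rw [e]
        exact Wf_antitone (by omega) (mulRight_bb (ihj i z hz))
    | succ k ihk =>
      intro j i z hz
      have e : z * mono p F i j (k+1) = (z * mono p F i j k) * cc p F := by
        simp [mono, pow_succ, mul_assoc]
      rw [e]
      exact Wf_antitone (by omega) (mulRight_cc (ihk j i z hz))
  refine span_map_le (LinearMap.mulLeft F x) ?_ y hy
  rintro w ⟨i,j,k,hw,rfl⟩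
  rw [LinearMap.mulLeft_apply]
  exact Wf_antitone (by omega) (key k j i x hx)

end Filt

section Main

set_option linter.unusedSectionVars false

variable (p : ℕ) (F : Type*) [Field F]

local notation "G" => unitriangular3 p
local notation "A" => MonoidAlgebra F (unitriangular3 p)

/-- the augmentation map -/
noncomputable def eps : MonoidAlgebra F (unitriangular3 p) →ₐ[F] F :=
  MonoidAlgebra.lift F F (unitriangular3 p) 1

/-- the augmentation ideal -/
noncomputable def Iaug : Ideal (MonoidAlgebra F (unitriangular3 p)) :=
  RingHom.ker (eps p F : MonoidAlgebra F (unitriangular3 p) →+* F)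

variable {p F}

lemma eps_of (g : unitriangular3 p) : eps p F (MonoidAlgebra.of F (unitriangular3 p) g) = 1 := by
  simp [eps]

lemma aa_mem_Iaug : aa p F ∈ Iaug p F := by
  simp [Iaug, RingHom.mem_ker, aa, map_sub, eps, MonoidAlgebra.lift_single]

lemma bb_mem_Iaug : bb p F ∈ Iaug p F := by
  simp [Iaug, RingHom.mem_ker, bb, map_sub, eps, MonoidAlgebra.lift_single]

lemma Iaug_isMaximal : (Iaug p F).IsMaximal := by
  apply RingHom.ker_isMaximal_of_surjective
  intro r
  exact ⟨algebraMap F _ r, (eps p F).commutes r⟩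

lemma jacobson_le_Iaug : (⊥ : Ideal (MonoidAlgebra F (unitriangular3 p))).jacobson ≤ Iaug p F :=
  sInf_le ⟨bot_le, Iaug_isMaximal⟩

lemma aa_mem_Wf1 : aa p F ∈ Wf p F 1 := by
  have e : aa p F = mono p F 1 0 0 := by simp [mono]
  rw [e]; exact mono_mem (by omega)

lemma bb_mem_Wf1 : bb p F ∈ Wf p F 1 := by
  have e : bb p F = mono p F 0 1 0 := by simp [mono]
  rw [e]; exact mono_mem (by omega)

lemma cc_mem_Wf1 : cc p F ∈ Wf p F 1 := by
  have e : cc p F = mono p F 0 0 1 := by simp [mono]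
  rw [e]; exact mono_mem (by omega)

lemma mul_sub_one_mem {u v : MonoidAlgebra F (unitriangular3 p)}
    (hu : u - 1 ∈ Wf p F 1) (hv : v - 1 ∈ Wf p F 1) : u * v - 1 ∈ Wf p F 1 := by
  have e : u * v - 1 = (u - 1) * (v - 1) + (u - 1) + (v - 1) := by noncomm_ring
  rw [e]
  exact Submodule.add_mem _ (Submodule.add_mem _ (Wf_antitone (by omega) (Wf_mul hu hv)) hu) hv

lemma pow_sub_one_mem {u : MonoidAlgebra F (unitriangular3 p)}
    (hu : u - 1 ∈ Wf p F 1) (n : ℕ) : u ^ n - 1 ∈ Wf p F 1 := by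
  induction n with
  | zero => simpa using (Wf p F 1).zero_mem
  | succ n ih =>
    rw [pow_succ]
    exact mul_sub_one_mem ih hu

lemma of_sub_one_mem (g : unitriangular3 p) [Fact p.Prime] :
    MonoidAlgebra.of F (unitriangular3 p) g - 1 ∈ Wf p F 1 := by
  obtain ⟨α, β, γ, rfl⟩ := gE_surj g
  have hα : ((α.val : ℕ) : ZMod p) = α := by rw [ZMod.natCast_val, ZMod.cast_id]
  have hβ : ((β.val : ℕ) : ZMod p) = β := by rw [ZMod.natCast_val, ZMod.cast_id]
  have hγ : ((γ.val : ℕ) : ZMod p) = γ := by rw [ZMod.natCast_val, ZMod.cast_id]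
  have hnf : gE p α β γ = (gE p 0 1 0) ^ β.val * (gE p 1 0 0) ^ α.val * (gE p 0 0 1) ^ γ.val := by
    rw [gE_normal, hα, hβ, hγ]
  rw [hnf, map_mul, map_mul, map_pow, map_pow, map_pow]
  have h1 : MonoidAlgebra.of F (unitriangular3 p) (gE p 0 1 0) - 1 ∈ Wf p F 1 := aa_mem_Wf1
  have h2 : MonoidAlgebra.of F (unitriangular3 p) (gE p 1 0 0) - 1 ∈ Wf p F 1 := bb_mem_Wf1
  have h3 : MonoidAlgebra.of F (unitriangular3 p) (gE p 0 0 1) - 1 ∈ Wf p F 1 := cc_mem_Wf1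
  exact mul_sub_one_mem (mul_sub_one_mem (pow_sub_one_mem h1 _) (pow_sub_one_mem h2 _))
    (pow_sub_one_mem h3 _)

lemma Iaug_le_Wf1 [Fact p.Prime] : ∀ x ∈ Iaug p F, x ∈ Wf p F 1 := by
  intro x hx
  have hsum : eps p F x = x.coeff.sum fun _ b => b := by
    simp [eps, MonoidAlgebra.lift_apply, smul_eq_mul, mul_one]
  have hx0 : x.coeff.sum (fun _ b => b) = 0 := by
    rw [← hsum]; exact hx
  have hrepr : x = ∑ g ∈ x.coeff.support, (x.coeff g) • (MonoidAlgebra.of F (unitriangular3 p) g - 1) := by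
    have h1 : ∑ g ∈ x.coeff.support, (x.coeff g) • (MonoidAlgebra.of F (unitriangular3 p) g - 1)
        = (∑ g ∈ x.coeff.support, (x.coeff g) • (MonoidAlgebra.of F (unitriangular3 p) g))
          - (∑ g ∈ x.coeff.support, (x.coeff g) • (1 : MonoidAlgebra F (unitriangular3 p))) := by
      rw [← Finset.sum_sub_distrib]
      exact Finset.sum_congr rfl fun g _ => smul_sub _ _ _
    have h2 : ∑ g ∈ x.coeff.support, (x.coeff g) • (MonoidAlgebra.of F (unitriangular3 p) g) = x := by
      conv_rhs => rw [← MonoidAlgebra.sum_single x]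
      rw [Finsupp.sum]
      refine Finset.sum_congr rfl fun g _ => ?_
      rw [MonoidAlgebra.of_apply, MonoidAlgebra.smul_single', mul_one]
    have h3 : ∑ g ∈ x.coeff.support, (x.coeff g) • (1 : MonoidAlgebra F (unitriangular3 p))
        = (x.coeff.sum fun _ b => b) • 1 := by
      rw [Finsupp.sum, Finset.sum_smul]
    rw [h1, h2, h3, hx0, zero_smul, sub_zero]
  rw [hrepr]
  exact Submodule.sum_mem _ fun g _ => Submodule.smul_mem _ _ (of_sub_one_mem g)

lemma Iaug_pow_le_Wf [Fact p.Prime] : ∀ n, ∀ x ∈ (Iaug p F) ^ (n+1), x ∈ Wf p F (n+1) := by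
  intro n
  induction n with
  | zero =>
    intro x hx
    rw [Submodule.pow_one] at hx
    exact Iaug_le_Wf1 x hx
  | succ n ih =>
    intro x hx
    rw [Submodule.pow_succ] at hx
    refine Submodule.mul_induction_on hx ?_ ?_
    · intro y hy z hz
      exact Wf_mul (ih y hy) (Iaug_le_Wf1 z hz)
    · intro y z hy hz
      exact Submodule.add_mem _ hy hz

lemma Wf_eq_bot [Fact p.Prime] [CharP F p] (hp2 : 2 ≤ p) : Wf p F (4*p-3) = ⊥ := by
  rw [Wf, Submodule.span_eq_bot]
  rintro x ⟨i, j, k, hw, rfl⟩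
  have hbig : p ≤ i ∨ p ≤ j ∨ p ≤ k := by omega
  have hz : ∀ u : MonoidAlgebra F (unitriangular3 p), ∀ m, u ^ p = 0 → p ≤ m → u ^ m = 0 := by
    intro u m hu hm
    rw [show m = p + (m - p) by omega, pow_add, hu, zero_mul]
  rcases hbig with h | h | h
  · rw [mono, hz _ i aa_pow_p h, zero_mul, zero_mul]
  · rw [mono, hz _ j bb_pow_p h, mul_zero, zero_mul]
  · rw [mono, hz _ k cc_pow_p h, mul_zero]

end Main

section Lower

set_option linter.unusedSectionVars false

variable {p : ℕ} {F : Type*} [Field F]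

local notation "G" => unitriangular3 p
local notation "A" => MonoidAlgebra F (unitriangular3 p)

lemma ideal_pow_mono {R : Type*} [Ring R] {I J : Ideal R} (h : I ≤ J) (n : ℕ) : I ^ n ≤ J ^ n := by
  induction n with
  | zero => rw [Submodule.pow_zero, Submodule.pow_zero]
  | succ n ih => rw [Submodule.pow_succ, Submodule.pow_succ]; exact mul_le_mul' ih h

lemma ideal_pow_bot {R : Type*} [Ring R] {J : Ideal R} {L : ℕ} (h : J ^ L = ⊥) {m : ℕ}
    (hm : L ≤ m) : J ^ m = ⊥ := by
  obtain ⟨d, rfl⟩ := Nat.exists_eq_add_of_le hm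
  induction d with
  | zero => simpa using h
  | succ d ih =>
    have : L + (d+1) = (L + d) + 1 := by omega
    rw [this, Submodule.pow_succ, ih (by omega), Submodule.bot_mul]

/-- `cc` as an explicit combination showing it lies in the square of any ideal containing
`aa` and `bb`. -/
lemma cc_eq : cc p F =
    (MonoidAlgebra.of F (unitriangular3 p) ((gE p 0 1 0 * gE p 1 0 0)⁻¹) * bb p F) * aa p F
    - (MonoidAlgebra.of F (unitriangular3 p) ((gE p 0 1 0 * gE p 1 0 0)⁻¹) * aa p F) * bb p F := by
  have hv : (1 + aa p F) * (1 + bb p F)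
      = MonoidAlgebra.of F (unitriangular3 p) (gE p 0 1 0 * gE p 1 0 0) := by
    rw [map_mul]
    simp [aa, bb]
  have hrel : MonoidAlgebra.of F (unitriangular3 p) (gE p 0 1 0 * gE p 1 0 0) * cc p F
      = bb p F * aa p F - aa p F * bb p F := by
    rw [← hv, comm_rel]
    noncomm_ring
  have hinv : MonoidAlgebra.of F (unitriangular3 p) ((gE p 0 1 0 * gE p 1 0 0)⁻¹)
      * MonoidAlgebra.of F (unitriangular3 p) (gE p 0 1 0 * gE p 1 0 0) = 1 := by
    rw [← map_mul, inv_mul_cancel, map_one]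
  calc cc p F = (MonoidAlgebra.of F (unitriangular3 p) ((gE p 0 1 0 * gE p 1 0 0)⁻¹)
      * MonoidAlgebra.of F (unitriangular3 p) (gE p 0 1 0 * gE p 1 0 0)) * cc p F := by
        rw [hinv, one_mul]
    _ = MonoidAlgebra.of F (unitriangular3 p) ((gE p 0 1 0 * gE p 1 0 0)⁻¹)
        * (bb p F * aa p F - aa p F * bb p F) := by rw [mul_assoc, hrel]
    _ = _ := by noncomm_ring

lemma append_aa {n : ℕ} {z : MonoidAlgebra F (unitriangular3 p)} (hz : z ∈ (Iaug p F) ^ n) :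
    z * aa p F ∈ (Iaug p F) ^ (n + 1) := by
  rw [Submodule.pow_succ]
  exact Submodule.mul_mem_mul hz aa_mem_Iaug

lemma append_bb {n : ℕ} {z : MonoidAlgebra F (unitriangular3 p)} (hz : z ∈ (Iaug p F) ^ n) :
    z * bb p F ∈ (Iaug p F) ^ (n + 1) := by
  rw [Submodule.pow_succ]
  exact Submodule.mul_mem_mul hz bb_mem_Iaug

lemma append_cc {n : ℕ} {z : MonoidAlgebra F (unitriangular3 p)} (hz : z ∈ (Iaug p F) ^ n) :
    z * cc p F ∈ (Iaug p F) ^ (n + 2) := by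
  have e : z * cc p F =
      (z * (MonoidAlgebra.of F (unitriangular3 p) ((gE p 0 1 0 * gE p 1 0 0)⁻¹) * bb p F)) * aa p F
      - (z * (MonoidAlgebra.of F (unitriangular3 p) ((gE p 0 1 0 * gE p 1 0 0)⁻¹) * aa p F)) * bb p F := by
    rw [cc_eq]; noncomm_ring
  rw [e]
  have hwb : MonoidAlgebra.of F (unitriangular3 p) ((gE p 0 1 0 * gE p 1 0 0)⁻¹) * bb p F
      ∈ Iaug p F := Ideal.mul_mem_left _ _ bb_mem_Iaug
  have hwa : MonoidAlgebra.of F (unitriangular3 p) ((gE p 0 1 0 * gE p 1 0 0)⁻¹) * aa p F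
      ∈ Iaug p F := Ideal.mul_mem_left _ _ aa_mem_Iaug
  have h1 : z * (MonoidAlgebra.of F (unitriangular3 p) ((gE p 0 1 0 * gE p 1 0 0)⁻¹) * bb p F)
      ∈ (Iaug p F) ^ (n+1) := by
    rw [Submodule.pow_succ]; exact Submodule.mul_mem_mul hz hwb
  have h2 : z * (MonoidAlgebra.of F (unitriangular3 p) ((gE p 0 1 0 * gE p 1 0 0)⁻¹) * aa p F)
      ∈ (Iaug p F) ^ (n+1) := by
    rw [Submodule.pow_succ]; exact Submodule.mul_mem_mul hz hwa
  exact Submodule.sub_mem _ (append_aa h1) (append_bb h2)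

lemma append_aa_pow {n m : ℕ} {z : MonoidAlgebra F (unitriangular3 p)}
    (hz : z ∈ (Iaug p F) ^ n) : z * aa p F ^ m ∈ (Iaug p F) ^ (n + m) := by
  induction m with
  | zero => simpa using hz
  | succ m ih =>
    have e : z * aa p F ^ (m+1) = (z * aa p F ^ m) * aa p F := by
      rw [pow_succ, mul_assoc]
    rw [e, show n + (m+1) = (n+m)+1 by omega]
    exact append_aa ih

lemma append_bb_pow {n m : ℕ} {z : MonoidAlgebra F (unitriangular3 p)}
    (hz : z ∈ (Iaug p F) ^ n) : z * bb p F ^ m ∈ (Iaug p F) ^ (n + m) := by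
  induction m with
  | zero => simpa using hz
  | succ m ih =>
    have e : z * bb p F ^ (m+1) = (z * bb p F ^ m) * bb p F := by
      rw [pow_succ, mul_assoc]
    rw [e, show n + (m+1) = (n+m)+1 by omega]
    exact append_bb ih

lemma append_cc_pow {n m : ℕ} {z : MonoidAlgebra F (unitriangular3 p)}
    (hz : z ∈ (Iaug p F) ^ n) : z * cc p F ^ m ∈ (Iaug p F) ^ (n + 2*m) := by
  induction m with
  | zero => simpa using hz
  | succ m ih =>
    have e : z * cc p F ^ (m+1) = (z * cc p F ^ m) * cc p F := by
      rw [pow_succ, mul_assoc]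
    rw [e, show n + 2*(m+1) = (n+2*m)+2 by omega]
    exact append_cc ih

lemma mono_mem_Iaug_pow (i j k : ℕ) : mono p F i j k ∈ (Iaug p F) ^ (i + j + 2*k) := by
  have h0 : (1 : MonoidAlgebra F (unitriangular3 p)) ∈ (Iaug p F) ^ 0 := by
    rw [Submodule.pow_zero, Submodule.one_eq_span]
    exact Submodule.subset_span rfl
  have h1 := append_cc_pow (append_bb_pow (append_aa_pow h0 (m := i)) (m := j)) (m := k)
  have e : mono p F i j k = ((1 * aa p F ^ i) * bb p F ^ j) * cc p F ^ k := by
    rw [mono, one_mul]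
  rw [e]
  simpa using h1

end Lower

section Nonzero

set_option linter.unusedSectionVars false

variable {p : ℕ} [Fact p.Prime] {F : Type*} [Field F]

local notation "G" => unitriangular3 p
local notation "A" => MonoidAlgebra F (unitriangular3 p)

lemma of_sub_one_pow (g : unitriangular3 p) (n : ℕ) :
    (MonoidAlgebra.of F (unitriangular3 p) g - 1) ^ n
      = ∑ m ∈ Finset.range (n+1),
          MonoidAlgebra.single (g ^ m) ((-1:F)^(n-m) * (n.choose m : F)) := by
  have hc : Commute (MonoidAlgebra.of F (unitriangular3 p) g) (-1 : MonoidAlgebra F (unitriangular3 p)) :=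
    (Commute.one_right _).neg_right
  rw [sub_eq_add_neg, hc.add_pow]
  refine Finset.sum_congr rfl fun m _ => ?_
  have e1 : (MonoidAlgebra.of F (unitriangular3 p) g) ^ m
      = MonoidAlgebra.single (g ^ m) (1:F) := by
    rw [MonoidAlgebra.of_apply, MonoidAlgebra.single_pow, one_pow]
  have e2 : (-1 : MonoidAlgebra F (unitriangular3 p)) ^ (n-m)
      = MonoidAlgebra.single (1 : unitriangular3 p) ((-1:F)^(n-m)) := by
    have h1 : (-1 : MonoidAlgebra F (unitriangular3 p))
        = MonoidAlgebra.single (1 : unitriangular3 p) (-1:F) := by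
      rw [MonoidAlgebra.one_def]
      exact (MonoidAlgebra.single_neg 1 (1:F)).symm
    rw [h1, MonoidAlgebra.single_pow, one_pow]
  have e3 : ((n.choose m : ℕ) : MonoidAlgebra F (unitriangular3 p))
      = MonoidAlgebra.single (1 : unitriangular3 p) ((n.choose m : ℕ) : F) := by
    rw [← map_natCast (algebraMap F (MonoidAlgebra F (unitriangular3 p))) (n.choose m)]
    rw [MonoidAlgebra.coe_algebraMap]
    simp
  rw [e1, e2, e3, MonoidAlgebra.single_mul_single, MonoidAlgebra.single_mul_single]
  rw [mul_one, mul_one, one_mul]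

/-- naturals below `p` are determined by their casts in `ZMod p` -/
lemma cast_inj_lt {i j : ℕ} (hi : i < p) (hj : j < p) (h : (i : ZMod p) = (j : ZMod p)) :
    i = j := by
  haveI : NeZero p := ⟨(Fact.out : p.Prime).pos.ne'⟩
  rw [← ZMod.val_cast_of_lt hi, ← ZMod.val_cast_of_lt hj, h]

lemma m0_apply (hp2 : 2 ≤ p) :
    (mono p F (p-1) (p-1) (p-1)).coeff (gE p (((p-1 : ℕ)) : ZMod p) (((p-1 : ℕ)) : ZMod p)
      (((p-1 : ℕ)) : ZMod p)) = 1 := by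
  set q := p - 1 with hq
  set g₀ : unitriangular3 p := gE p ((q : ℕ) : ZMod p) ((q : ℕ) : ZMod p) ((q : ℕ) : ZMod p) with hg₀
  have ee : ∀ m, ((-1:F)^(q-m) * (q.choose m : F)) = ((-1:F)^(q-m) * (q.choose m : F)) := fun _ => rfl
  have ha := of_sub_one_pow (F := F) (gE p 0 1 0) q
  have hb := of_sub_one_pow (F := F) (gE p 1 0 0) q
  have hcc := of_sub_one_pow (F := F) (gE p 0 0 1) q
  have expand : mono p F q q q
      = ∑ i ∈ Finset.range (q+1), ∑ j ∈ Finset.range (q+1), ∑ k ∈ Finset.range (q+1),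
          MonoidAlgebra.single (gE p ((j:ℕ) : ZMod p) ((i:ℕ) : ZMod p) ((k:ℕ) : ZMod p))
            (((-1:F)^(q-i) * (q.choose i : F)) * ((-1:F)^(q-j) * (q.choose j : F))
              * ((-1:F)^(q-k) * (q.choose k : F))) := by
    rw [mono]
    show (MonoidAlgebra.of F (unitriangular3 p) (gE p 0 1 0) - 1) ^ q
      * (MonoidAlgebra.of F (unitriangular3 p) (gE p 1 0 0) - 1) ^ q
      * (MonoidAlgebra.of F (unitriangular3 p) (gE p 0 0 1) - 1) ^ q = _
    rw [ha, hb, hcc]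
    rw [Finset.sum_mul_sum, Finset.sum_mul]
    refine Finset.sum_congr rfl fun i _ => ?_
    rw [Finset.sum_mul]
    refine Finset.sum_congr rfl fun j _ => ?_
    rw [MonoidAlgebra.single_mul_single, Finset.mul_sum]
    refine Finset.sum_congr rfl fun k _ => ?_
    rw [MonoidAlgebra.single_mul_single, gE_normal]
  have hlt : ∀ {m : ℕ}, m ∈ Finset.range (q+1) → m < p := by
    intro m hm
    have := Finset.mem_range.mp hm
    omega
  have hqmem : q ∈ Finset.range (q+1) := Finset.mem_range.mpr (by omega)
  have hgne : ∀ i j k : ℕ, i < p → j < p → k < p → ¬(i = q ∧ j = q ∧ k = q) →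
      gE p ((j:ℕ) : ZMod p) ((i:ℕ) : ZMod p) ((k:ℕ) : ZMod p) ≠ g₀ := by
    intro i j k hi hj hk hne heq
    rw [hg₀] at heq
    obtain ⟨h1, h2, h3⟩ := gE_inj heq
    exact hne ⟨cast_inj_lt hi (by omega) h2, cast_inj_lt hj (by omega) h1,
      cast_inj_lt hk (by omega) h3⟩
  rw [expand]
  rw [MonoidAlgebra.coeff_sum, Finsupp.finset_sum_apply]
  rw [Finset.sum_eq_single_of_mem q hqmem (fun i hi hne => ?_)]
  · rw [MonoidAlgebra.coeff_sum, Finsupp.finset_sum_apply]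
    rw [Finset.sum_eq_single_of_mem q hqmem (fun j hj hne => ?_)]
    · rw [MonoidAlgebra.coeff_sum, Finsupp.finset_sum_apply]
      rw [Finset.sum_eq_single_of_mem q hqmem (fun k hk hne => ?_)]
      · rw [MonoidAlgebra.coeff_single, Finsupp.single_apply, if_pos rfl]
        simp
      · rw [MonoidAlgebra.coeff_single, Finsupp.single_apply,
          if_neg (hgne q q k (by omega) (by omega) (hlt hk) (by tauto))]
    · rw [MonoidAlgebra.coeff_sum, Finsupp.finset_sum_apply]
      refine Finset.sum_eq_zero fun k hk => ?_
      rw [MonoidAlgebra.coeff_single, Finsupp.single_apply,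
        if_neg (hgne q j k (by omega) (hlt hj) (hlt hk) (by tauto))]
  · rw [MonoidAlgebra.coeff_sum, Finsupp.finset_sum_apply]
    refine Finset.sum_eq_zero fun j hj => ?_
    rw [MonoidAlgebra.coeff_sum, Finsupp.finset_sum_apply]
    refine Finset.sum_eq_zero fun k hk => ?_
    rw [MonoidAlgebra.coeff_single, Finsupp.single_apply,
      if_neg (hgne i j k (hlt hi) (hlt hj) (hlt hk) (by tauto))]

lemma m0_ne_zero (hp2 : 2 ≤ p) : mono p F (p-1) (p-1) (p-1) ≠ 0 := by
  intro h
  have := m0_apply (p := p) (F := F) hp2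
  rw [h] at this
  simp at this

end Nonzero

theorem loewyLength_groupAlgebra_unitriangular3 (p : ℕ) (hp : p.Prime) (hodd : Odd p)
    (F : Type*) [Field F] [CharP F p] :
    loewyLength (MonoidAlgebra F (unitriangular3 p)) = 4 * p - 3 ∧
      3 * p - 2 < 4 * p - 3 ∧ rho p 3 1 = 3 * p - 2 := by
  haveI : Fact p.Prime := ⟨hp⟩
  have hp2 : 2 ≤ p := hp.two_le
  set J := (⊥ : Ideal (MonoidAlgebra F (unitriangular3 p))).jacobson with hJ
  have hIW : ∀ x ∈ (Iaug p F) ^ (4*p-3), x ∈ Wf p F (4*p-3) := by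
    intro x hx
    have h1 : (4*p-4)+1 = 4*p-3 := by omega
    rw [← h1] at hx ⊢
    exact Iaug_pow_le_Wf (4*p-4) x hx
  have hupper : J ^ (4*p-3) = ⊥ := by
    rw [eq_bot_iff]
    intro x hx
    have hx2 : x ∈ (Iaug p F) ^ (4*p-3) := ideal_pow_mono jacobson_le_Iaug _ hx
    have hx3 := hIW x hx2
    rw [Wf_eq_bot hp2] at hx3
    exact hx3
  have hnilp : ∀ z ∈ Iaug p F, IsNilpotent z := by
    intro z hz
    refine ⟨4*p-3, ?_⟩
    have h1 : z ^ (4*p-3) ∈ (Iaug p F) ^ (4*p-3) := Submodule.pow_mem_pow _ hz _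
    have h2 := hIW _ h1
    rw [Wf_eq_bot hp2, Submodule.mem_bot] at h2
    exact h2
  have hIJ : Iaug p F ≤ J := by
    intro x hx
    show x ∈ (⊥ : Ideal (MonoidAlgebra F (unitriangular3 p))).jacobson
    rw [Ideal.jacobson, Ideal.mem_sInf]
    rintro M ⟨-, hM⟩
    by_contra hxM
    set K := M ⊔ Ideal.span {x} with hK
    have hxK : x ∈ K := Submodule.mem_sup_right (Ideal.subset_span rfl)
    have hKtop : K = ⊤ := by
      rcases eq_or_ne K ⊤ with h | h
      · exact h
      · exact absurd ((hM.eq_of_le h le_sup_left) ▸ hxM) (by simp [hxK])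
    have h1K : (1 : MonoidAlgebra F (unitriangular3 p)) ∈ K := hKtop ▸ Submodule.mem_top
    obtain ⟨m, hm, y, hy, hmy⟩ := Submodule.mem_sup.mp h1K
    obtain ⟨a, ha⟩ := Submodule.mem_span_singleton.mp hy
    have hax : a • x = a * x := smul_eq_mul _ _
    have haxI : a * x ∈ Iaug p F := Ideal.mul_mem_left _ a hx
    have hmeq : m = 1 - a * x := by
      rw [← hmy, ← ha, hax]; noncomm_ring
    have hunit : IsUnit m := by
      rw [hmeq, sub_eq_add_neg, add_comm]
      exact ((hnilp _ haxI).neg).isUnit_add_one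
    obtain ⟨u, hu⟩ := hunit
    have h1M : (1 : MonoidAlgebra F (unitriangular3 p)) ∈ M := by
      have := Ideal.mul_mem_left M (↑u⁻¹) hm
      rwa [← hu, Units.inv_mul] at this
    exact hM.ne_top (Ideal.eq_top_iff_one M |>.mpr h1M)
  have hlow : mono p F (p-1) (p-1) (p-1) ∈ J ^ (4*p-4) := by
    have h := mono_mem_Iaug_pow (p := p) (F := F) (p-1) (p-1) (p-1)
    rw [show (p-1)+(p-1)+2*(p-1) = 4*p-4 from by omega] at h
    exact ideal_pow_mono hIJ _ h
  have hne : J ^ (4*p-4) ≠ ⊥ := by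
    intro hbot
    rw [hbot, Submodule.mem_bot] at hlow
    exact m0_ne_zero hp2 hlow
  have hmem : (4*p-3) ∈ {L : ℕ | 0 < L ∧ J ^ L = ⊥} := ⟨by omega, hupper⟩
  have hmin : ∀ L ∈ {L : ℕ | 0 < L ∧ J ^ L = ⊥}, 4*p-3 ≤ L := by
    rintro L ⟨hL0, hLbot⟩
    by_contra hlt
    push_neg at hlt
    exact hne (ideal_pow_bot hLbot (by omega))
  refine ⟨?_, by omega, by simp [rho]; omega⟩
  have := le_antisymm (Nat.sInf_le hmem) (hmin _ (Nat.sInf_mem (⟨_, hmem⟩ : Set.Nonempty _)))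
  exact this
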